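/- Let f : ℝ³ → ℂ be continuously differentiable and compactly supported, and let u_f(t,x) := (t/4π) ∫_{S²} f(x + tω) dσ(ω) be the free sine wave propagator applied to f. Then for every t > 0 and every x ∈ ℝ³, |u_f(t,x)| ≤ ‖∇f‖_{L¹(ℝ³)}/(4π t); that is, the dispersive estimate ‖ sin(t√(−Δ))/√(−Δ) f ‖_{L^∞_x} ≲ t^{−1} ‖∇f‖_{L¹} holds. -/

import Mathlib

set_option autoImplicit false

open MeasureTheory ENNReal Real

noncomputable section

/-- `ℝ³` as a Euclidean space. -/
abbrev R3 : Type := EuclideanSpace ℝ (Fin 3)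

/-- The surface measure on the unit sphere `S² ⊂ ℝ³`. -/
def sphereMeasure : Measure (Metric.sphere (0 : R3) 1) :=
  (volume : Measure R3).toSphere

/-- The free sine wave propagator (Kirchhoff formula):
`u_f(t,x) = (t/4π) ∫_{S²} f(x + tω) dσ(ω)`. -/
def sinProp (f : R3 → ℂ) (t : ℝ) (x : R3) : ℂ :=
  (t / (4 * π)) • ∫ ω : Metric.sphere (0 : R3) 1, f (x + t • (ω : R3)) ∂sphereMeasure

/-- Polar coordinates for `lintegral` on `ℝ³`. -/
lemma polar_lintegral (G : R3 → ℝ≥0∞) (hG : Measurable G) :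
    ∫⁻ y, G y = ∫⁻ ω : Metric.sphere (0:R3) 1,
      (∫⁻ r in Set.Ioi (0:ℝ), ENNReal.ofReal (r^2) * G (r • (ω:R3))) ∂sphereMeasure := by
  have hdim : Module.finrank ℝ R3 = 3 := finrank_euclideanSpace_fin
  have mp := (volume : Measure R3).measurePreserving_homeomorphUnitSphereProd
  rw [hdim] at mp
  have hcont : Continuous fun p : Metric.sphere (0:R3) 1 × Set.Ioi (0:ℝ) =>
      (p.2 : ℝ) • (p.1 : R3) := by fun_prop
  have hGm : Measurable fun p : Metric.sphere (0:R3) 1 × Set.Ioi (0:ℝ) =>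
      G ((p.2 : ℝ) • (p.1 : R3)) := hG.comp hcont.measurable
  calc ∫⁻ y, G y ∂(volume : Measure R3)
      = ∫⁻ x : ({0}ᶜ : Set R3), G x ∂((volume : Measure R3).comap (↑)) := by
        rw [lintegral_subtype_comap (measurableSet_singleton _).compl,
          restrict_compl_singleton]
    _ = ∫⁻ p : Metric.sphere (0:R3) 1 × Set.Ioi (0:ℝ), G ((p.2 : ℝ) • (p.1 : R3))
          ∂((volume : Measure R3).toSphere.prod (Measure.volumeIoiPow 2)) := by
        rw [← mp.lintegral_comp hGm]
        refine lintegral_congr fun x => ?_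
        congr 1
        simp [smul_inv_smul₀ (norm_ne_zero_iff.2 x.2)]
    _ = ∫⁻ ω : Metric.sphere (0:R3) 1,
          (∫⁻ r : Set.Ioi (0:ℝ), G ((r : ℝ) • (ω:R3)) ∂(Measure.volumeIoiPow 2))
          ∂sphereMeasure := lintegral_prod _ hGm.aemeasurable
    _ = _ := by
        refine lintegral_congr fun ω => ?_
        have hGi : Measurable fun r : Set.Ioi (0:ℝ) => G ((r:ℝ) • (ω:R3)) :=
          hG.comp (by fun_prop)
        rw [Measure.volumeIoiPow, lintegral_withDensity_eq_lintegral_mul _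
          (f := fun r : Set.Ioi (0:ℝ) => ENNReal.ofReal ((r:ℝ)^2)) (by fun_prop) hGi]
        rw [← lintegral_subtype_comap measurableSet_Ioi
          (fun r : ℝ => ENNReal.ofReal (r^2) * G (r • (ω:R3)))]
        simp [sq]

lemma line_isometry (x ω : R3) (hω : ‖ω‖ = 1) : Isometry (fun s : ℝ => x + s • ω) := by
  refine Isometry.of_dist_eq fun a b => ?_
  have : x + a • ω - (x + b • ω) = (a - b) • ω := by rw [sub_smul]; abel
  rw [dist_eq_norm, dist_eq_norm, this, norm_smul, hω, mul_one, Real.norm_eq_abs]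

lemma ftc_bound (f : R3 → ℂ) (hf : ContDiff ℝ 1 f) (hsupp : HasCompactSupport f)
    (x ω : R3) (hω : ‖ω‖ = 1) (t : ℝ) :
    ‖f (x + t • ω)‖ ≤ ∫ s in Set.Ioi t, ‖fderiv ℝ f (x + s • ω)‖ := by
  have hdf := hf.differentiable one_ne_zero
  have hfd_cont : Continuous (fderiv ℝ f) := hf.continuous_fderiv one_ne_zero
  set g : ℝ → ℝ := fun s => ‖fderiv ℝ f (x + s • ω)‖ with hg
  have hline : Continuous (fun s : ℝ => x + s • ω) := (line_isometry x ω hω).continuous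
  have hg_cont : Continuous g := (hfd_cont.comp hline).norm
  have hg_supp : HasCompactSupport g :=
    (hsupp.fderiv ℝ).norm.comp_isClosedEmbedding (line_isometry x ω hω).isClosedEmbedding
  have hg_int : Integrable g := hg_cont.integrable_of_hasCompactSupport hg_supp
  have hg_nn : ∀ s, 0 ≤ g s := fun s => norm_nonneg _
  -- pick R beyond the support
  obtain ⟨M, hM⟩ := (hsupp.isCompact.isBounded).subset_closedBall 0
  set R : ℝ := max t (M + ‖x‖ + 1) with hR
  have htR : t ≤ R := le_max_left _ _
  have hfR : f (x + R • ω) = 0 := by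
    by_contra h
    have : x + R • ω ∈ Metric.closedBall (0 : R3) M := hM (subset_tsupport f (by simpa using h))
    rw [Metric.mem_closedBall, dist_zero_right] at this
    have h0 : (R:ℝ) • ω = (x + R • ω) + (-x) := by abel
    have h1 : R ≤ ‖x + R • ω‖ + ‖x‖ := by
      calc R ≤ |R| := le_abs_self R
        _ = ‖R • ω‖ := by rw [norm_smul, hω, mul_one, Real.norm_eq_abs]
        _ ≤ ‖x + R • ω‖ + ‖x‖ := by rw [h0]; simpa using norm_add_le (x + R • ω) (-x)
    have h2 : M + ‖x‖ + 1 ≤ R := le_max_right _ _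
    nlinarith [norm_nonneg x]
  -- derivative of s ↦ f (x + s • ω)
  have hderiv : ∀ s : ℝ, HasDerivAt (fun s : ℝ => f (x + s • ω))
      ((fderiv ℝ f (x + s • ω)) ω) s := by
    intro s
    have h1 : HasDerivAt (fun s : ℝ => x + s • ω) ω s := by
      simpa using ((hasDerivAt_id s).smul_const ω).const_add x
    exact ((hdf (x + s • ω)).hasFDerivAt).comp_hasDerivAt s h1
  have hderiv_cont : Continuous fun s : ℝ => (fderiv ℝ f (x + s • ω)) ω :=
    (hfd_cont.comp hline).clm_apply continuous_const
  have hFTC : ∫ s in t..R, (fderiv ℝ f (x + s • ω)) ω =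
      f (x + R • ω) - f (x + t • ω) :=
    intervalIntegral.integral_eq_sub_of_hasDerivAt (fun s _ => hderiv s)
      (hderiv_cont.intervalIntegrable t R)
  have key : ‖f (x + t • ω)‖ = ‖∫ s in t..R, (fderiv ℝ f (x + s • ω)) ω‖ := by
    rw [hFTC, hfR, zero_sub, norm_neg]
  rw [key]
  calc ‖∫ s in t..R, (fderiv ℝ f (x + s • ω)) ω‖
      ≤ ∫ s in t..R, ‖(fderiv ℝ f (x + s • ω)) ω‖ :=
        intervalIntegral.norm_integral_le_integral_norm htR
    _ ≤ ∫ s in t..R, g s := by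
        apply intervalIntegral.integral_mono_on htR
          ((hderiv_cont.norm.intervalIntegrable t R))
          (hg_cont.intervalIntegrable t R)
        intro s _
        calc ‖(fderiv ℝ f (x + s • ω)) ω‖ ≤ ‖fderiv ℝ f (x + s • ω)‖ * ‖ω‖ :=
              ContinuousLinearMap.le_opNorm _ _
          _ = g s := by rw [hω, mul_one]
    _ ≤ ∫ s in Set.Ioi t, g s := by
        rw [intervalIntegral.integral_of_le htR]
        exact setIntegral_mono_set hg_int.integrableOn
          (Filter.Eventually.of_forall hg_nn)
          (Filter.Eventually.of_forall Set.Ioc_subset_Ioi_self)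

theorem sine_dispersive_estimate (f : R3 → ℂ) (hf : ContDiff ℝ 1 f)
    (hsupp : HasCompactSupport f) :
    ∀ t : ℝ, 0 < t → ∀ x : R3,
      ‖sinProp f t x‖ ≤ (∫ y : R3, ‖fderiv ℝ f y‖) / (4 * π * t) := by
  intro t ht x
  set g : R3 → ℝ := fun y => ‖fderiv ℝ f y‖ with hgdef
  have hg_cont : Continuous g := (hf.continuous_fderiv one_ne_zero).norm
  have hg_supp : HasCompactSupport g := (hsupp.fderiv ℝ).norm
  have hg_int : Integrable g := hg_cont.integrable_of_hasCompactSupport hg_supp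
  have hg_nn : ∀ y, 0 ≤ g y := fun y => norm_nonneg _
  have hInt_nn : 0 ≤ ∫ y, g y := integral_nonneg hg_nn
  have ht2 : (0:ℝ) < t^2 := by positivity
  -- pointwise ENNReal bound on the sphere
  have hpt : ∀ ω : Metric.sphere (0:R3) 1,
      ENNReal.ofReal ‖f (x + t • (ω:R3))‖ ≤
        ENNReal.ofReal ((t^2)⁻¹) *
          ∫⁻ s in Set.Ioi (0:ℝ), ENNReal.ofReal (s^2) * ENNReal.ofReal (g (x + s • (ω:R3))) := by
    intro ω
    have hω : ‖(ω:R3)‖ = 1 := by simpa using mem_sphere_zero_iff_norm.mp ω.2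
    have hiso := line_isometry x (ω:R3) hω
    have hline_int : Integrable (fun s : ℝ => g (x + s • (ω:R3))) :=
      (hg_cont.comp hiso.continuous).integrable_of_hasCompactSupport
        (hg_supp.comp_isClosedEmbedding hiso.isClosedEmbedding)
    calc ENNReal.ofReal ‖f (x + t • (ω:R3))‖
        ≤ ENNReal.ofReal (∫ s in Set.Ioi t, g (x + s • (ω:R3))) :=
          ENNReal.ofReal_le_ofReal (ftc_bound f hf hsupp x ω hω t)
      _ = ∫⁻ s in Set.Ioi t, ENNReal.ofReal (g (x + s • (ω:R3))) :=
          ofReal_integral_eq_lintegral_ofReal hline_int.integrableOn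
            (Filter.Eventually.of_forall fun s => hg_nn _)
      _ ≤ ∫⁻ s in Set.Ioi t, ENNReal.ofReal ((t^2)⁻¹) *
            (ENNReal.ofReal (s^2) * ENNReal.ofReal (g (x + s • (ω:R3)))) := by
          refine setLIntegral_mono' measurableSet_Ioi fun s hs => ?_
          have hts : t ≤ s := (Set.mem_Ioi.mp hs).le
          have h1 : (1:ℝ≥0∞) ≤ ENNReal.ofReal ((t^2)⁻¹) * ENNReal.ofReal (s^2) := by
            rw [← ENNReal.inv_mul_cancel (a := ENNReal.ofReal (t^2))
              (by simp [ENNReal.ofReal_pos, ht2, ht.ne']) ENNReal.ofReal_ne_top,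
              ← ENNReal.ofReal_inv_of_pos ht2]
            exact mul_le_mul_right (ENNReal.ofReal_le_ofReal (by nlinarith)) _
          calc ENNReal.ofReal (g (x + s • (ω:R3)))
              = 1 * ENNReal.ofReal (g (x + s • (ω:R3))) := (one_mul _).symm
            _ ≤ (ENNReal.ofReal ((t^2)⁻¹) * ENNReal.ofReal (s^2)) *
                  ENNReal.ofReal (g (x + s • (ω:R3))) := mul_le_mul_left h1 _
            _ = _ := by ring
      _ = ENNReal.ofReal ((t^2)⁻¹) * ∫⁻ s in Set.Ioi t,
            ENNReal.ofReal (s^2) * ENNReal.ofReal (g (x + s • (ω:R3))) :=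
          lintegral_const_mul' _ _ ENNReal.ofReal_ne_top
      _ ≤ _ := mul_le_mul_right (lintegral_mono_set (Set.Ioi_subset_Ioi ht.le)) _
  -- integrate over the sphere and use polar coordinates
  set G : R3 → ℝ≥0∞ := fun y => ENNReal.ofReal (g (x + y)) with hGdef
  have hGm : Measurable G :=
    ((hg_cont.comp (continuous_const.add continuous_id)).measurable).ennreal_ofReal
  have hsphere : (∫⁻ ω : Metric.sphere (0:R3) 1,
      ENNReal.ofReal ‖f (x + t • (ω:R3))‖ ∂sphereMeasure) ≤
      ENNReal.ofReal ((t^2)⁻¹) * ENNReal.ofReal (∫ y, g y) := by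
    calc (∫⁻ ω : Metric.sphere (0:R3) 1, ENNReal.ofReal ‖f (x + t • (ω:R3))‖ ∂sphereMeasure)
        ≤ ∫⁻ ω : Metric.sphere (0:R3) 1, ENNReal.ofReal ((t^2)⁻¹) *
            (∫⁻ s in Set.Ioi (0:ℝ), ENNReal.ofReal (s^2) * G (s • (ω:R3))) ∂sphereMeasure := by
          refine lintegral_mono fun ω => ?_
          simpa [hGdef] using hpt ω
      _ = ENNReal.ofReal ((t^2)⁻¹) * ∫⁻ ω : Metric.sphere (0:R3) 1,
            (∫⁻ s in Set.Ioi (0:ℝ), ENNReal.ofReal (s^2) * G (s • (ω:R3))) ∂sphereMeasure :=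
          lintegral_const_mul' _ _ ENNReal.ofReal_ne_top
      _ = ENNReal.ofReal ((t^2)⁻¹) * ∫⁻ y, G y := by rw [← polar_lintegral G hGm]
      _ = ENNReal.ofReal ((t^2)⁻¹) * ∫⁻ y, ENNReal.ofReal (g y) := by
          congr 1
          exact lintegral_add_left_eq_self (fun y => ENNReal.ofReal (g y)) x
      _ = ENNReal.ofReal ((t^2)⁻¹) * ENNReal.ofReal (∫ y, g y) := by
          rw [ofReal_integral_eq_lintegral_ofReal hg_int
            (Filter.Eventually.of_forall hg_nn)]
  -- conclude
  have hI : ‖∫ ω : Metric.sphere (0:R3) 1, f (x + t • (ω:R3)) ∂sphereMeasure‖ ≤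
      (t^2)⁻¹ * ∫ y, g y := by
    refine (norm_integral_le_lintegral_norm _).trans ?_
    have := ENNReal.toReal_mono (by finiteness) hsphere
    rw [ENNReal.toReal_mul, ENNReal.toReal_ofReal (by positivity),
      ENNReal.toReal_ofReal hInt_nn] at this
    exact this
  have hπ : (0:ℝ) < π := Real.pi_pos
  rw [sinProp, norm_smul, Real.norm_eq_abs, abs_of_nonneg (by positivity : (0:ℝ) ≤ t / (4*π))]
  calc t / (4*π) * ‖∫ ω : Metric.sphere (0:R3) 1, f (x + t • (ω:R3)) ∂sphereMeasure‖
      ≤ t / (4*π) * ((t^2)⁻¹ * ∫ y, g y) :=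
        mul_le_mul_of_nonneg_left hI (by positivity)
    _ = (∫ y, g y) / (4 * π * t) := by
        field_simp
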